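/- Fix β>0 and 0<x₀<β, and let Y_{−1,β}(x,y)=(−(y+β),−x). Then with T=log((β+x₀)/(β−x₀))>0 the curve γ(t)=(((x₀+β)e^{−t}+(x₀−β)e^{t})/2, −β+((x₀+β)e^{−t}−(x₀−β)e^{t})/2) satisfies γ'(t)=Y_{−1,β}(γ(t)) for all t, γ(0)=(x₀,0), the second coordinate of γ(t) is strictly negative for 0<t<T, and γ(T)=(−x₀,0). Hence the orbit of Y_{−1,β} in the half-plane y≤0 starting at (x₀,0) with 0<x₀<β returns to the x-axis exactly at (−x₀,0): the half-return map of Y_{−1,β} on (0,β) is x↦−x. (The orbit lies on the hyperbola x²−(y+β)²=x₀²−β².) -/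

import Mathlib

/-- The half-return map of Y_{-1,β}(x,y) = (-(y+β), -x) on (0,β) is x ↦ -x:
the orbit starting at (x₀,0) with 0 < x₀ < β stays in y < 0 for 0 < t < T
with T = log((β+x₀)/(β-x₀)) and returns to the x-axis at (-x₀,0); it lies on
the hyperbola x² - (y+β)² = x₀² - β². -/
theorem stmt_16 (β x₀ : ℝ) (hβ : 0 < β) (h1 : 0 < x₀) (h2 : x₀ < β) :
    let Y : ℝ × ℝ → ℝ × ℝ := fun p => (-(p.2 + β), -p.1)
    let T : ℝ := Real.log ((β + x₀) / (β - x₀))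
    let γ : ℝ → ℝ × ℝ := fun t =>
      (((x₀ + β) * Real.exp (-t) + (x₀ - β) * Real.exp t) / 2,
       -β + ((x₀ + β) * Real.exp (-t) - (x₀ - β) * Real.exp t) / 2)
    0 < T ∧
    (∀ t : ℝ, HasDerivAt γ (Y (γ t)) t) ∧
    γ 0 = (x₀, 0) ∧
    (∀ t : ℝ, 0 < t → t < T → (γ t).2 < 0) ∧
    γ T = (-x₀, 0) ∧
    (∀ t : ℝ, (γ t).1 ^ 2 - ((γ t).2 + β) ^ 2 = x₀ ^ 2 - β ^ 2) := by
  intro Y T γ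
  have hb1 : 0 < β - x₀ := by linarith
  have hb2 : 0 < β + x₀ := by linarith
  have hR : 1 < (β + x₀) / (β - x₀) := by
    rw [lt_div_iff₀ hb1]; linarith
  have hRpos : 0 < (β + x₀) / (β - x₀) := by positivity
  have hexpT : Real.exp T = (β + x₀) / (β - x₀) := Real.exp_log hRpos
  have hT : 0 < T := Real.log_pos hR
  refine ⟨hT, ?_, ?_, ?_, ?_, ?_⟩
  · intro t
    have hexp : HasDerivAt (fun t : ℝ => Real.exp t) (Real.exp t) t := Real.hasDerivAt_exp t
    have hneg : HasDerivAt (fun t : ℝ => Real.exp (-t)) (-Real.exp (-t)) t := by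
      have := (Real.hasDerivAt_exp (-t)).comp t (hasDerivAt_neg t)
      simpa [Function.comp_def] using this
    have h1' : HasDerivAt (fun t => ((x₀ + β) * Real.exp (-t) + (x₀ - β) * Real.exp t) / 2)
        (((x₀ + β) * (-Real.exp (-t)) + (x₀ - β) * Real.exp t) / 2) t := by
      exact (((hneg.const_mul (x₀ + β)).add (hexp.const_mul (x₀ - β))).div_const 2)
    have h2' : HasDerivAt (fun t => -β + ((x₀ + β) * Real.exp (-t) - (x₀ - β) * Real.exp t) / 2)
        (((x₀ + β) * (-Real.exp (-t)) - (x₀ - β) * Real.exp t) / 2) t := by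
      exact (HasDerivAt.const_add (-β)
        (((hneg.const_mul (x₀ + β)).sub (hexp.const_mul (x₀ - β))).div_const 2))
    have := h1'.prodMk h2'
    convert this using 1
    show ((-(((γ t).2) + β), -((γ t).1)) : ℝ × ℝ) = _
    simp only [γ, Prod.mk.injEq]
    constructor <;> ring
  · simp only [γ, Real.exp_zero, neg_zero, Prod.mk.injEq]
    constructor <;> ring
  · intro t ht htT
    have hu1 : 1 < Real.exp t := by
      have := Real.exp_lt_exp.mpr ht; simpa using this
    have hu2 : Real.exp t < (β + x₀) / (β - x₀) := by
      rw [← hexpT]; exact Real.exp_lt_exp.mpr htT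
    have hu2' : (β - x₀) * Real.exp t < β + x₀ := by
      rw [lt_div_iff₀ hb1] at hu2
      nlinarith
    have hupos : 0 < Real.exp t := Real.exp_pos t
    have hinv : Real.exp (-t) = 1 / Real.exp t := by
      rw [Real.exp_neg, one_div]
    show -β + ((x₀ + β) * Real.exp (-t) - (x₀ - β) * Real.exp t) / 2 < 0
    rw [hinv]
    rw [show -β + ((x₀ + β) * (1 / Real.exp t) - (x₀ - β) * Real.exp t) / 2
      = ((Real.exp t - 1) * ((β - x₀) * Real.exp t - (β + x₀))) / (2 * Real.exp t) by
        field_simp; ring]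
    apply div_neg_of_neg_of_pos
    · exact mul_neg_of_pos_of_neg (by linarith) (by linarith)
    · positivity
  · have hexpnT : Real.exp (-T) = (β - x₀) / (β + x₀) := by
      rw [Real.exp_neg, hexpT, inv_div]
    simp only [γ, hexpT, hexpnT]
    have e1 : (x₀ + β) * ((β - x₀) / (β + x₀)) = β - x₀ := by
      field_simp; ring
    have e2 : (x₀ - β) * ((β + x₀) / (β - x₀)) = -(β + x₀) := by
      field_simp; ring
    rw [e1, e2]
    simp only [Prod.mk.injEq]
    constructor <;> ring
  · intro t
    have hmul : Real.exp (-t) * Real.exp t = 1 := by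
      rw [← Real.exp_add]; simp
    show (((x₀ + β) * Real.exp (-t) + (x₀ - β) * Real.exp t) / 2) ^ 2
      - ((-β + ((x₀ + β) * Real.exp (-t) - (x₀ - β) * Real.exp t) / 2) + β) ^ 2
      = x₀ ^ 2 - β ^ 2
    nlinarith [hmul]
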